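/- Let f : ℝ → ℝ be a nonnegative differentiable function, B : ℝ → ℝ a nonnegative continuous function, and let a ≥ 0, C ≥ 0, λ > 0. Assume that f'(t) ≤ a·f(t) + B(t) for all t ≥ 0, that f and B are integrable on [t, ∞) for every t ≥ 0, and that ∫_t^∞ f(s) ds ≤ C·e^{-λt} and ∫_t^∞ B(s) ds ≤ C·e^{-λt} for all t ≥ 0. Then there exists a constant C' ≥ 0, depending only on a, C and λ, such that f(t) ≤ C'·e^{-λt} for all t ≥ 1. -/

import Mathlib

open MeasureTheory

/-- Analytic core of the parabolic regularity arguments in Lemmas 3.3 and 5.2: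
integrated-in-time exponential decay of an energy quantity, together with a
differential inequality controlling its growth, upgrades to pointwise-in-time
exponential decay, with a constant depending only on `a`, `C` and `λ`. -/
theorem stmt_10 (a C lam : ℝ) (ha : 0 ≤ a) (hC : 0 ≤ C) (hlam : 0 < lam) :
    ∃ C' : ℝ, 0 ≤ C' ∧
      ∀ f B : ℝ → ℝ,
        (∀ t, 0 ≤ f t) → Differentiable ℝ f →
        (∀ t, 0 ≤ B t) → Continuous B →
        (∀ t, 0 ≤ t → deriv f t ≤ a * f t + B t) →
        (∀ t, 0 ≤ t → IntegrableOn f (Set.Ici t)) →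
        (∀ t, 0 ≤ t → IntegrableOn B (Set.Ici t)) →
        (∀ t, 0 ≤ t → (∫ s in Set.Ici t, f s) ≤ C * Real.exp (-lam * t)) →
        (∀ t, 0 ≤ t → (∫ s in Set.Ici t, B s) ≤ C * Real.exp (-lam * t)) →
        ∀ t, 1 ≤ t → f t ≤ C' * Real.exp (-lam * t) := by
  refine ⟨3 * C * Real.exp ((a + lam) / 2), by positivity, ?_⟩
  intro f B hf0 hfd hB0 hBc hode hfint hBint hfdec hBdec t ht
  set c : ℝ := t - 1 / 2 with hcdef
  have hct : c ≤ t := by rw [hcdef]; linarith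
  have hc0 : (0 : ℝ) ≤ c := by rw [hcdef]; linarith
  -- minimum of f on [c, t]
  obtain ⟨s₀, hs₀, hmin⟩ := isCompact_Icc.exists_isMinOn
    ⟨c, Set.left_mem_Icc.2 hct⟩ hfd.continuous.continuousOn
  obtain ⟨hcs₀, hs₀t⟩ := hs₀
  have hs₀0 : (0 : ℝ) ≤ s₀ := le_trans hc0 hcs₀
  have hIcc_int : IntegrableOn f (Set.Icc c t) :=
    (hfint c hc0).mono_set Set.Icc_subset_Ici_self
  have h1 : f s₀ * (1 / 2) ≤ ∫ s in Set.Icc c t, f s := by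
    have hconst : (∫ _ in Set.Icc c t, f s₀) = (t - c) * f s₀ := by
      rw [setIntegral_const, measureReal_def, Real.volume_Icc, smul_eq_mul,
        ENNReal.toReal_ofReal (by linarith)]
    have hmono := setIntegral_mono_on
      (integrableOn_const (C := f s₀) (by rw [Real.volume_Icc]; exact ENNReal.ofReal_ne_top))
      hIcc_int measurableSet_Icc (fun x hx => isMinOn_iff.mp hmin x hx)
    rw [hconst] at hmono
    have h12 : t - c = 1 / 2 := by rw [hcdef]; ring
    rw [h12] at hmono
    linarith
  have h2 : (∫ s in Set.Icc c t, f s) ≤ ∫ s in Set.Ici c, f s := by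
    apply setIntegral_mono_set (hfint c hc0)
      (Filter.Eventually.of_forall hf0)
      (Filter.Eventually.of_forall (fun x hx => Set.Icc_subset_Ici_self hx))
  have hfs₀ : f s₀ ≤ 2 * (C * Real.exp (-lam * c)) := by
    have := hfdec c hc0
    nlinarith
  -- Gronwall-type argument on [c, t]
  set E : ℝ → ℝ := fun s => Real.exp (a * (c - s)) with hEdef
  set g : ℝ → ℝ := fun s => E s * f s with hgdef
  set φ : ℝ → ℝ := fun s => ∫ u in c..s, B u with hφdef
  have hE : ∀ s : ℝ, HasDerivAt E (E s * (a * -1)) s := by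
    intro s
    exact (((hasDerivAt_id s).const_sub c).const_mul a).exp
  have hg : ∀ s : ℝ, HasDerivAt g (E s * (a * -1) * f s + E s * deriv f s) s :=
    fun s => (hE s).mul (hfd s).hasDerivAt
  have hφ : ∀ s : ℝ, HasDerivAt φ (B s) s :=
    fun s => (hBc.integral_hasStrictDerivAt c s).hasDerivAt
  have hh : ∀ s : ℝ, HasDerivAt (fun s => φ s - g s)
      (B s - (E s * (a * -1) * f s + E s * deriv f s)) s :=
    fun s => (hφ s).sub (hg s)
  have hmono : MonotoneOn (fun s => φ s - g s) (Set.Icc c t) := by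
    apply monotoneOn_of_deriv_nonneg (convex_Icc c t)
    · exact (fun s _ => ((hh s).differentiableAt).continuousAt.continuousWithinAt)
    · exact fun s _ => ((hh s).differentiableAt).differentiableWithinAt
    · intro x hx
      rw [interior_Icc] at hx
      rw [(hh x).deriv]
      have hx0 : (0 : ℝ) ≤ x := le_trans hc0 hx.1.le
      have hEx : E x ≤ 1 := by
        rw [hEdef]
        calc Real.exp (a * (c - x)) ≤ Real.exp 0 :=
              Real.exp_le_exp.2 (by nlinarith [hx.1])
          _ = 1 := Real.exp_zero
      have hExpos : 0 < E x := Real.exp_pos _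
      have hodex := hode x hx0
      have key : E x * (a * -1) * f x + E x * deriv f x ≤ B x := by
        have e1 : E x * (a * -1) * f x + E x * deriv f x
            = E x * (deriv f x - a * f x) := by ring
        rw [e1]
        calc E x * (deriv f x - a * f x) ≤ E x * B x :=
              mul_le_mul_of_nonneg_left (by linarith) hExpos.le
          _ ≤ B x := mul_le_of_le_one_left (hB0 x) hEx
      linarith
  have hmain : φ s₀ - g s₀ ≤ φ t - g t :=
    hmono ⟨hcs₀, hs₀t⟩ (Set.right_mem_Icc.2 hct) hs₀t
  -- bound φ t - φ s₀
  have hBiint : ∀ u v : ℝ, IntervalIntegrable B volume u v := fun u v =>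
    hBc.intervalIntegrable u v
  have hφdiff : φ t - φ s₀ = ∫ u in s₀..t, B u := by
    rw [hφdef]
    exact intervalIntegral.integral_interval_sub_left (hBiint c t) (hBiint c s₀)
  have hBbound : (∫ u in s₀..t, B u) ≤ C * Real.exp (-lam * c) := by
    rw [intervalIntegral.integral_of_le hs₀t]
    have step1 : (∫ u in Set.Ioc s₀ t, B u) ≤ ∫ u in Set.Ici s₀, B u := by
      apply setIntegral_mono_set (hBint s₀ hs₀0)
        (Filter.Eventually.of_forall hB0)
        (Filter.Eventually.of_forall (fun x hx => le_of_lt hx.1))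
    have step2 := hBdec s₀ hs₀0
    have step3 : Real.exp (-lam * s₀) ≤ Real.exp (-lam * c) :=
      Real.exp_le_exp.2 (by nlinarith)
    nlinarith [step1, step2, mul_le_mul_of_nonneg_left step3 hC]
  -- bound g s₀
  have hgs₀ : g s₀ ≤ 2 * (C * Real.exp (-lam * c)) := by
    have hEs₀ : E s₀ ≤ 1 := by
      rw [hEdef]
      calc Real.exp (a * (c - s₀)) ≤ Real.exp 0 :=
            Real.exp_le_exp.2 (by nlinarith)
        _ = 1 := Real.exp_zero
    calc g s₀ = E s₀ * f s₀ := rfl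
      _ ≤ 1 * f s₀ := mul_le_mul_of_nonneg_right hEs₀ (hf0 s₀)
      _ = f s₀ := one_mul _
      _ ≤ 2 * (C * Real.exp (-lam * c)) := hfs₀
  -- conclude
  have hgt : g t ≤ 3 * (C * Real.exp (-lam * c)) := by linarith
  have hgtval : g t = Real.exp (-(a / 2)) * f t := by
    simp only [hgdef, hEdef]
    rw [show a * (c - t) = -(a / 2) by rw [hcdef]; ring]
  have hft : f t = Real.exp (a / 2) * g t := by
    rw [hgtval, ← mul_assoc, ← Real.exp_add]
    simp
  have hexp : Real.exp (a / 2) * Real.exp (-lam * c)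
      = Real.exp ((a + lam) / 2) * Real.exp (-lam * t) := by
    rw [← Real.exp_add, ← Real.exp_add]
    congr 1
    rw [hcdef]; ring
  rw [hft]
  calc Real.exp (a / 2) * g t
      ≤ Real.exp (a / 2) * (3 * (C * Real.exp (-lam * c))) :=
        mul_le_mul_of_nonneg_left hgt (Real.exp_pos _).le
    _ = 3 * C * (Real.exp (a / 2) * Real.exp (-lam * c)) := by ring
    _ = 3 * C * (Real.exp ((a + lam) / 2) * Real.exp (-lam * t)) := by rw [hexp]
    _ = 3 * C * Real.exp ((a + lam) / 2) * Real.exp (-lam * t) := by ring
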